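/- Let P(x,y) = sin²((π/2)·cosh(x)·sin y) / cosh²((π/2)·sinh(x)·cos y) for real x and y with |y| < π/2. Then P(x,y) ≤ P(0,y) = sin²((π/2)·sin y) for all real x. -/

import Mathlib

open Real

set_option maxHeartbeats 1000000

/-- Quadratic lower bound for cosh. -/
lemma cosh_ge_one_add_half_sq (b : ℝ) (hb : 0 ≤ b) : 1 + b ^ 2 / 2 ≤ Real.cosh b := by
  have h1 : Real.cosh b = 1 + 2 * Real.sinh (b / 2) ^ 2 := by
    have := Real.cosh_two_mul (b / 2)
    have h2 := Real.cosh_sq (b / 2)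
    have : Real.cosh (2 * (b / 2)) = Real.cosh (b/2) ^ 2 + Real.sinh (b/2) ^2 := this
    rw [show 2 * (b / 2) = b by ring] at this
    linarith
  have h3 : b / 2 ≤ Real.sinh (b / 2) := Real.self_le_sinh_iff.2 (by linarith)
  have h4 : (b / 2) ^ 2 ≤ Real.sinh (b / 2) ^ 2 := by
    apply pow_le_pow_left₀ (by linarith) h3
  nlinarith

/-- Key lemma L1. -/
lemma L1 (t c2 : ℝ) (ht : 0 < t) (ht2 : t < π / 2) (hc2 : c2 = 1 - (2 * t / π) ^ 2) :
    1 ≤ Real.sin t * (1 + π ^ 4 * c2 ^ 2 / (32 * t ^ 2)) := by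
  have hpi := Real.pi_gt_d6
  have hpi' := Real.pi_lt_d2
  have hππ : (0:ℝ) < π := by linarith
  have hc2' : c2 = (π - 2*t) * (π + 2*t) / π ^ 2 := by
    field_simp [hc2]; rw [hc2, sub_mul, div_pow, div_mul_cancel₀ _ (by positivity)]; ring
  have hc2pos : 0 < c2 := by
    rw [hc2']
    apply div_pos (mul_pos (by linarith) (by linarith)) (by positivity)
  rcases le_or_gt t (π / 4) with hcase | hcase
  · -- t ≤ π/4 : use Jordan sin t ≥ 2t/π and c2 ≥ 3/4
    have hj : 2 / π * t ≤ Real.sin t := Real.mul_le_sin ht.le (by linarith)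
    have hc2ge : (3:ℝ)/4 ≤ c2 := by
      have h5 : (2 * t / π) ^ 2 ≤ (1:ℝ)/4 := by
        rw [div_pow, div_le_iff₀ (by positivity)]
        nlinarith
      rw [hc2]; linarith
    have hsinpos : 0 < Real.sin t := Real.sin_pos_of_pos_of_lt_pi ht (by linarith)
    have key : 1 ≤ Real.sin t * (π ^ 4 * c2 ^ 2 / (32 * t ^ 2)) := by
      have h1 : (2 / π * t) * (π ^ 4 * (3/4) ^ 2 / (32 * t ^ 2)) ≤
          Real.sin t * (π ^ 4 * c2 ^ 2 / (32 * t ^ 2)) := by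
        apply mul_le_mul hj ?_ (by positivity) hsinpos.le
        apply div_le_div_of_nonneg_right ?_ (by positivity)
        · apply mul_le_mul_of_nonneg_left ?_ (by positivity)
          apply pow_le_pow_left₀ (by norm_num) hc2ge
      refine le_trans ?_ h1
      rw [show (2 / π * t) * (π ^ 4 * (3/4) ^ 2 / (32 * t ^ 2)) = 9 * π ^3 / (256 * t) by
        field_simp; ring]
      rw [le_div_iff₀ (by positivity)]
      nlinarith
    nlinarith [Real.sin_le_one t]
  · -- t > π/4 : δ = π/2 - t
    obtain ⟨δ, hδ⟩ : ∃ d : ℝ, d = π / 2 - t := ⟨_, rfl⟩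
    have hδpos : 0 < δ := by rw [hδ]; linarith
    have hδle : δ < π / 4 := by rw [hδ]; linarith
    have hsin : Real.sin t = Real.cos δ := by
      rw [hδ, Real.cos_pi_div_two_sub]
    have hcosge : 1 - δ ^ 2 / 2 ≤ Real.cos δ := Real.one_sub_sq_div_two_le_cos
    have hcos07 : (7:ℝ)/10 ≤ Real.cos δ := by
      have h2 : Real.cos δ ≥ Real.cos (π/4) :=
        Real.cos_le_cos_of_nonneg_of_le_pi hδpos.le (by linarith) hδle.le
      rw [Real.cos_pi_div_four] at h2
      nlinarith [Real.sq_sqrt (by norm_num : (2:ℝ) ≥ 0), Real.sqrt_nonneg 2]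
    have hc2ge : 3 * δ / π ≤ c2 := by
      rw [hc2']
      rw [div_le_div_iff₀ (by positivity) (by positivity)]
      have : π - 2 * t = 2 * δ := by rw [hδ]; ring
      rw [this]
      nlinarith [mul_nonneg hδpos.le hππ.le, mul_pos hδpos hππ]
    have ht2' : t ^ 2 ≤ (π/2)^2 := by nlinarith
    -- sin t * π^4 c2^2/(32 t^2) ≥ (7/10) * π^4 * (9δ²/π²) / (32 * π²/4) = 63δ²/80 ≥ δ²/2
    have key : δ ^ 2 / 2 ≤ Real.sin t * (π ^ 4 * c2 ^ 2 / (32 * t ^ 2)) := by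
      rw [hsin]
      have hc2sq : (3 * δ / π) ^ 2 ≤ c2 ^ 2 := by
        apply pow_le_pow_left₀ (by positivity) hc2ge
      have h1 : π ^ 4 * (3 * δ / π) ^ 2 / (32 * t ^ 2) ≤ π ^ 4 * c2 ^ 2 / (32 * t ^ 2) := by
        apply div_le_div_of_nonneg_right ?_ (by positivity)
        exact mul_le_mul_of_nonneg_left hc2sq (by positivity)
      have h2 : (7/10) * (π ^ 4 * (3 * δ / π) ^ 2 / (32 * t ^ 2)) ≤
          Real.cos δ * (π ^ 4 * c2 ^ 2 / (32 * t ^ 2)) := by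
        apply mul_le_mul hcos07 h1 (by positivity) (by linarith [Real.cos_le_one δ])
      refine le_trans ?_ h2
      rw [show π ^ 4 * (3 * δ / π) ^ 2 / (32 * t ^ 2) = 9 * π^2 * δ^2 / (32 * t^2) by
        field_simp; ring]
      have hmono : 9 * π^2 * δ^2 / (32 * (π/2)^2) ≤ 9 * π^2 * δ^2 / (32 * t^2) := by
        apply div_le_div_of_nonneg_left (by positivity) (by positivity)
        have : (0:ℝ) < 32 := by norm_num
        nlinarith
      have heq : 9 * π^2 * δ^2 / (32 * (π/2)^2) = 9 * δ^2 / 8 := by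
        field_simp; ring
      rw [heq] at hmono
      nlinarith
    have : 1 - δ ^2/2 ≤ Real.sin t := hsin ▸ hcosge
    nlinarith

/-- The tangent-type lemma: `t * cos t ≤ sin t * (π² c² / 4)` when `c² = 1 - (2t/π)²`. -/
lemma tanL (t c2 : ℝ) (ht : 0 < t) (ht2 : t < π / 2) (hc2 : c2 = 1 - (2 * t / π) ^ 2) :
    t * Real.cos t ≤ Real.sin t * (π ^ 2 * c2 / 4) := by
  have hπ : (0:ℝ) < π := Real.pi_pos
  have hδ : Real.cos t = Real.sin (π / 2 - t) := (Real.sin_pi_div_two_sub t).symm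
  have hδle : Real.sin (π / 2 - t) ≤ π / 2 - t := Real.sin_le (by linarith)
  have hj : 2 / π * t ≤ Real.sin t := Real.mul_le_sin ht.le (by linarith)
  have hc : π ^ 2 * c2 / 4 = (π / 2 - t) * (π + 2 * t) / 2 := by
    rw [hc2]; field_simp; ring
  have h1 : t * Real.cos t ≤ t * (π / 2 - t) := by
    rw [hδ]; exact mul_le_mul_of_nonneg_left hδle ht.le
  have h2 : (2 / π * t) * ((π / 2 - t) * (π + 2 * t) / 2) ≤
      Real.sin t * (π ^ 2 * c2 / 4) := by
    rw [hc]
    apply mul_le_mul_of_nonneg_right hj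
    have h3 : 0 ≤ π / 2 - t := by linarith
    positivity
  refine h1.trans (le_trans ?_ h2)
  rw [show 2 / π * t * ((π / 2 - t) * (π + 2 * t) / 2)
      = t * ((π / 2 - t) * (π + 2 * t)) / π by ring, le_div_iff₀ hπ]
  nlinarith [mul_nonneg (mul_nonneg ht.le (by linarith : (0:ℝ) ≤ π / 2 - t)) ht.le]

lemma sinh_abs' (x : ℝ) : Real.sinh |x| = |Real.sinh x| := by
  rcases abs_cases x with ⟨h1, h2⟩ | ⟨h1, h2⟩
  · rw [h1, abs_of_nonneg (Real.sinh_nonneg_iff.2 h2)]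
  · rw [h1, Real.sinh_neg, abs_of_nonpos (by simpa using Real.sinh_le_sinh.2 h2.le)]

/-- Main key lemma. -/
lemma key (t c x : ℝ) (ht : 0 < t) (ht2 : t < π / 2) (hc0 : 0 < c)
    (hc2 : c ^ 2 = 1 - (2 * t / π) ^ 2) (hx : 0 ≤ x) :
    |Real.sin (t * Real.cosh x)| ≤ Real.sin t * Real.cosh (π / 2 * c * Real.sinh x) := by
  have hπ : (0:ℝ) < π := Real.pi_pos
  have hsinpos : 0 < Real.sin t := Real.sin_pos_of_pos_of_lt_pi ht (by linarith)
  have hsx : 0 ≤ Real.sinh x := Real.sinh_nonneg_iff.2 hx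
  rcases le_or_gt 1 (Real.sin t * Real.cosh (π / 2 * c * Real.sinh x)) with hA | hB
  · exact le_trans (abs_le.2 ⟨Real.neg_one_le_sin _, Real.sin_le_one _⟩) hA
  · -- Case B : sin t * cosh B < 1.  First show t * cosh x ≤ π / 2.
    have hvt : t * Real.cosh x ≤ π / 2 := by
      by_contra hcon
      push_neg at hcon
      have hch : π / (2 * t) < Real.cosh x := by
        rw [div_lt_iff₀ (by positivity)]; nlinarith
      have hch0 : (0:ℝ) < π / (2 * t) := by positivity
      have hsq : (π * c / (2 * t)) ^ 2 ≤ Real.sinh x ^ 2 := by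
        rw [Real.sinh_sq]
        have h5 : (π / (2 * t)) ^ 2 < Real.cosh x ^ 2 :=
          pow_lt_pow_left₀ hch hch0.le (by norm_num)
        have h6 : (π * c / (2 * t)) ^ 2 = (π / (2 * t)) ^ 2 - 1 := by
          have : (π * c / (2 * t)) ^ 2 = (π / (2 * t)) ^ 2 * c ^ 2 := by ring
          rw [this, hc2]; field_simp
        linarith
      have husinh : π * c / (2 * t) ≤ Real.sinh x := by
        nlinarith [hsq, hsx]
      have hB' : π ^ 2 * c ^ 2 / (4 * t) ≤ π / 2 * c * Real.sinh x := by
        have h7 := mul_le_mul_of_nonneg_left husinh (by positivity : (0:ℝ) ≤ π / 2 * c)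
        calc π ^ 2 * c ^ 2 / (4 * t) = π / 2 * c * (π * c / (2 * t)) := by
              field_simp; ring
          _ ≤ π / 2 * c * Real.sinh x := h7
      have hmono : Real.cosh (π ^ 2 * c ^ 2 / (4 * t)) ≤
          Real.cosh (π / 2 * c * Real.sinh x) := by
        rw [Real.cosh_le_cosh, abs_of_nonneg (by positivity), abs_of_nonneg (by positivity)]
        exact hB'
      have hcosh := cosh_ge_one_add_half_sq (π ^ 2 * c ^ 2 / (4 * t)) (by positivity)
      have heq : (π ^ 2 * c ^ 2 / (4 * t)) ^ 2 / 2 = π ^ 4 * (c ^ 2) ^ 2 / (32 * t ^ 2) := by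
        field_simp; ring
      have h8 : 1 ≤ Real.sin t * Real.cosh (π / 2 * c * Real.sinh x) := by
        calc (1:ℝ) ≤ Real.sin t * (1 + π ^ 4 * (c ^ 2) ^ 2 / (32 * t ^ 2)) :=
              L1 t (c ^ 2) ht ht2 hc2
          _ ≤ Real.sin t * Real.cosh (π ^ 2 * c ^ 2 / (4 * t)) := by
              apply mul_le_mul_of_nonneg_left _ hsinpos.le
              rw [← heq] at *; linarith
          _ ≤ Real.sin t * Real.cosh (π / 2 * c * Real.sinh x) :=
              mul_le_mul_of_nonneg_left hmono hsinpos.le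
      linarith
    -- Now the monotonicity argument.
    set φ : ℝ → ℝ := fun w =>
      Real.sin t * Real.cosh (π / 2 * c * Real.sinh w) - Real.sin (t * Real.cosh w) with hφ
    have hderiv : ∀ w : ℝ, HasDerivAt φ
        (Real.sin t * (Real.sinh (π / 2 * c * Real.sinh w) * (π / 2 * c * Real.cosh w)) -
          Real.cos (t * Real.cosh w) * (t * Real.sinh w)) w := by
      intro w
      have h1 : HasDerivAt (fun w => π / 2 * c * Real.sinh w) (π / 2 * c * Real.cosh w) w :=
        (Real.hasDerivAt_sinh w).const_mul _
      have h2 : HasDerivAt (fun w => Real.cosh (π / 2 * c * Real.sinh w))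
          (Real.sinh (π / 2 * c * Real.sinh w) * (π / 2 * c * Real.cosh w)) w :=
        (Real.hasDerivAt_cosh _).comp w h1
      have h3 : HasDerivAt (fun w => t * Real.cosh w) (t * Real.sinh w) w :=
        (Real.hasDerivAt_cosh w).const_mul t
      have h4 : HasDerivAt (fun w => Real.sin (t * Real.cosh w))
          (Real.cos (t * Real.cosh w) * (t * Real.sinh w)) w :=
        (Real.hasDerivAt_sin _).comp w h3
      exact (h2.const_mul _).sub h4
    have hmon : MonotoneOn φ (Set.Icc 0 x) := by
      apply monotoneOn_of_deriv_nonneg (convex_Icc 0 x)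
      · apply Continuous.continuousOn; fun_prop
      · intro w _
        exact (hderiv w).differentiableAt.differentiableWithinAt
      · intro w hw
        rw [interior_Icc, Set.mem_Ioo] at hw
        rw [(hderiv w).deriv]
        have h0w : 0 ≤ w := hw.1.le
        have hsw : 0 ≤ Real.sinh w := Real.sinh_nonneg_iff.2 h0w
        have hcw : 1 ≤ Real.cosh w := Real.one_le_cosh w
        have harg1 : t ≤ t * Real.cosh w := by nlinarith
        have harg2 : t * Real.cosh w ≤ π / 2 := by
          have hcc : Real.cosh w ≤ Real.cosh x := by
            rw [Real.cosh_le_cosh, abs_of_nonneg h0w, abs_of_nonneg hx]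
            exact hw.2.le
          nlinarith
        have hcos : Real.cos (t * Real.cosh w) ≤ Real.cos t :=
          Real.cos_le_cos_of_nonneg_of_le_pi ht.le (by linarith) harg1
        have hs1 : π / 2 * c * Real.sinh w ≤ Real.sinh (π / 2 * c * Real.sinh w) :=
          Real.self_le_sinh_iff.2 (by positivity)
        have htl := tanL t (c ^ 2) ht ht2 hc2
        have e1 : Real.cos (t * Real.cosh w) * (t * Real.sinh w) ≤
            Real.cos t * (t * Real.sinh w) :=
          mul_le_mul_of_nonneg_right hcos (by positivity)
        have e2 : Real.cos t * (t * Real.sinh w) ≤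
            Real.sin t * (π ^ 2 * c ^ 2 / 4) * Real.sinh w := by
          have := mul_le_mul_of_nonneg_right htl hsw
          calc Real.cos t * (t * Real.sinh w) = t * Real.cos t * Real.sinh w := by ring
            _ ≤ Real.sin t * (π ^ 2 * c ^ 2 / 4) * Real.sinh w := this
        have e3 : Real.sin t * (π ^ 2 * c ^ 2 / 4) * Real.sinh w ≤
            Real.sin t * (Real.sinh (π / 2 * c * Real.sinh w) * (π / 2 * c * Real.cosh w)) := by
          have h9 : π / 2 * c ≤ π / 2 * c * Real.cosh w := by
            have := mul_le_mul_of_nonneg_left hcw (by positivity : (0:ℝ) ≤ π / 2 * c)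
            simpa using this
          have h10 : (0:ℝ) ≤ π / 2 * c * Real.sinh w := by positivity
          have h11 : (π / 2 * c * Real.sinh w) * (π / 2 * c) ≤
              Real.sinh (π / 2 * c * Real.sinh w) * (π / 2 * c * Real.cosh w) :=
            mul_le_mul hs1 h9 (by positivity) (le_trans h10 hs1)
          calc Real.sin t * (π ^ 2 * c ^ 2 / 4) * Real.sinh w
              = Real.sin t * ((π / 2 * c * Real.sinh w) * (π / 2 * c)) := by ring
            _ ≤ Real.sin t * (Real.sinh (π / 2 * c * Real.sinh w) * (π / 2 * c * Real.cosh w)) :=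
              mul_le_mul_of_nonneg_left h11 hsinpos.le
        linarith
    have h0x : φ 0 ≤ φ x := hmon (Set.left_mem_Icc.2 hx) (Set.right_mem_Icc.2 hx) hx
    have hφ0 : φ 0 = 0 := by simp [hφ]
    have hsge : 0 ≤ Real.sin (t * Real.cosh x) := by
      apply Real.sin_nonneg_of_nonneg_of_le_pi (by positivity) (by linarith)
    rw [abs_of_nonneg hsge]
    rw [hφ0] at h0x
    have hφx : φ x = Real.sin t * Real.cosh (π / 2 * c * Real.sinh x) -
        Real.sin (t * Real.cosh x) := rfl
    rw [hφx] at h0x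
    linarith

theorem P_le_P_zero (x y : ℝ) (hy : |y| < π / 2) :
    Real.sin (π / 2 * Real.cosh x * Real.sin y) ^ 2 /
        Real.cosh (π / 2 * Real.sinh x * Real.cos y) ^ 2
      ≤ Real.sin (π / 2 * Real.sin y) ^ 2 := by
  have hπ : (0:ℝ) < π := Real.pi_pos
  obtain ⟨hy1, hy2⟩ := abs_lt.1 hy
  have hcos : 0 < Real.cos y := Real.cos_pos_of_mem_Ioo ⟨hy1, hy2⟩
  rcases eq_or_ne (Real.sin y) 0 with h0 | h0
  · simp [h0]
  · obtain ⟨t, htdef⟩ : ∃ t : ℝ, t = π / 2 * |Real.sin y| := ⟨_, rfl⟩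
    have habs0 : 0 < |Real.sin y| := abs_pos.2 h0
    have hsin1 : |Real.sin y| < 1 := by
      have h1 := Real.sin_sq_add_cos_sq y
      nlinarith [sq_abs (Real.sin y), abs_nonneg (Real.sin y)]
    have ht : 0 < t := by rw [htdef]; positivity
    have ht2 : t < π / 2 := by rw [htdef]; nlinarith
    have hc2 : Real.cos y ^ 2 = 1 - (2 * t / π) ^ 2 := by
      rw [htdef]
      have h13 : 2 * (π / 2 * |Real.sin y|) / π = |Real.sin y| := by field_simp
      rw [h13, sq_abs]
      have := Real.sin_sq_add_cos_sq y
      linarith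
    have hkey := key t (Real.cos y) |x| ht ht2 hcos hc2 (abs_nonneg x)
    have e1 : |Real.sin (π / 2 * Real.cosh x * Real.sin y)| =
        |Real.sin (t * Real.cosh |x|)| := by
      rw [Real.cosh_abs, htdef]
      rcases abs_cases (Real.sin y) with ⟨ha, _⟩ | ⟨ha, _⟩
      · rw [ha]; ring_nf
      · rw [ha, show π / 2 * -Real.sin y * Real.cosh x =
            -(π / 2 * Real.cosh x * Real.sin y) by ring, Real.sin_neg, abs_neg]
    have e2 : Real.cosh (π / 2 * Real.sinh x * Real.cos y) =
        Real.cosh (π / 2 * Real.cos y * Real.sinh |x|) := by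
      rw [sinh_abs', ← Real.cosh_abs, ← Real.cosh_abs (π / 2 * Real.cos y * |Real.sinh x|)]
      congr 1
      rw [abs_mul, abs_mul, abs_mul, abs_mul, abs_abs,
        abs_of_nonneg (by positivity : (0:ℝ) ≤ π / 2), abs_of_nonneg hcos.le]
      ring
    have e3 : Real.sin t ^ 2 = Real.sin (π / 2 * Real.sin y) ^ 2 := by
      rw [htdef]
      rcases abs_cases (Real.sin y) with ⟨ha, _⟩ | ⟨ha, _⟩
      · rw [ha]
      · rw [ha, show π / 2 * -Real.sin y = -(π / 2 * Real.sin y) by ring, Real.sin_neg]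
        ring
    rw [← e1, ← e2] at hkey
    have hd : (0:ℝ) < Real.cosh (π / 2 * Real.sinh x * Real.cos y) ^ 2 := by
      positivity
    rw [div_le_iff₀ hd]
    have hsin_t_nonneg : 0 ≤ Real.sin t :=
      Real.sin_nonneg_of_nonneg_of_le_pi ht.le (by linarith)
    calc Real.sin (π / 2 * Real.cosh x * Real.sin y) ^ 2
        = |Real.sin (π / 2 * Real.cosh x * Real.sin y)| ^ 2 := (sq_abs _).symm
      _ ≤ (Real.sin t * Real.cosh (π / 2 * Real.sinh x * Real.cos y)) ^ 2 :=
          pow_le_pow_left₀ (abs_nonneg _) hkey 2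
      _ = Real.sin t ^ 2 * Real.cosh (π / 2 * Real.sinh x * Real.cos y) ^ 2 := by ring
      _ = Real.sin (π / 2 * Real.sin y) ^ 2 *
          Real.cosh (π / 2 * Real.sinh x * Real.cos y) ^ 2 := by rw [e3]
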